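/- (Generalized Schur test) Let (X, μ) be a measure space, K : X × X → [0,∞) measurable, 1 < p ≤ q < ∞ with 1/p + 1/p' = 1, and δ₁ + δ₂ = 1 real numbers. Suppose there exist positive measurable functions h₁, h₂ on X and constants C₁, C₂ > 0 such that ∫ K(x,y)^{δ₁ p'} h₁(y)^{p'} dμ(y) ≤ C₁ h₂(x)^{p'} for a.e. x, and ∫ K(x,y)^{δ₂ q} h₂(x)^{q} dμ(x) ≤ C₂ h₁(y)^{q} for a.e. y. Then the integral operator T f(x) = ∫ K(x,y) f(y) dμ(y) maps L^p(X) to L^q(X) with operator norm at most C₁^{1/p'} C₂^{1/q}. -/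

import Mathlib

open MeasureTheory ENNReal

lemma minkowski_lintegral {X Y : Type*} [MeasurableSpace X] [MeasurableSpace Y]
    (μ : Measure X) (ν : Measure Y) [SigmaFinite μ] [SigmaFinite ν]
    (F : X → Y → ℝ≥0∞) (hF : Measurable (Function.uncurry F)) {r : ℝ} (hr : 1 ≤ r) :
    ∫⁻ x, (∫⁻ y, F x y ∂ν) ^ r ∂μ ≤ (∫⁻ y, (∫⁻ x, F x y ^ r ∂μ) ^ (1/r) ∂ν) ^ r := by
  have hr0 : 0 < r := lt_of_lt_of_le one_pos hr
  rcases eq_or_lt_of_le hr with rfl | hr1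
  · simp only [rpow_one, one_div, inv_one]
    rw [lintegral_lintegral_swap hF.aemeasurable]
  set Φ : X → ℝ≥0∞ := fun x => ∫⁻ y, F x y ∂ν with hΦdef
  have hΦ : Measurable Φ := hF.lintegral_prod_right'
  set B : ℝ≥0∞ := ∫⁻ y, (∫⁻ x, F x y ^ r ∂μ) ^ (1/r) ∂ν with hBdef
  -- conjugate exponent
  have hconj : r.HolderConjugate (r / (r - 1)) := Real.HolderConjugate.conjExponent hr1
  set r' : ℝ := r / (r - 1)
  -- truncations
  set Φn : ℕ → X → ℝ≥0∞ := fun n x => (spanningSets μ n).indicator (fun x => min (Φ x) n) x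
    with hΦndef
  have hΦnmeas : ∀ n, Measurable (Φn n) := fun n =>
    (hΦ.min measurable_const).indicator (measurableSet_spanningSets μ n)
  have hΦnle : ∀ n x, Φn n x ≤ Φ x := by
    intro n x
    refine (Set.indicator_le_self' (fun _ _ => zero_le) x).trans ?_
    exact min_le_left _ _
  have hΦnmono : Monotone Φn := by
    intro m n hmn x
    simp only [hΦndef]
    by_cases hx : x ∈ spanningSets μ m
    · rw [Set.indicator_of_mem hx, Set.indicator_of_mem (monotone_spanningSets μ hmn hx)]
      exact min_le_min le_rfl (Nat.cast_le.2 hmn)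
    · rw [Set.indicator_of_notMem hx]; exact zero_le
  have hΦnsup : ∀ x, (⨆ n, Φn n x) = Φ x := by
    intro x
    refine le_antisymm (iSup_le fun n => hΦnle n x) ?_
    obtain ⟨N, hN⟩ : ∃ N, x ∈ spanningSets μ N := by
      have := iUnion_spanningSets μ
      have hx : x ∈ ⋃ n, spanningSets μ n := this ▸ Set.mem_univ x
      exact Set.mem_iUnion.1 hx
    rcases eq_or_ne (Φ x) ∞ with h | h
    · rw [h]
      refine le_of_eq ?_
      rw [eq_comm, ← top_le_iff]
      calc (⊤ : ℝ≥0∞) = ⨆ n : ℕ, (n : ℝ≥0∞) := (iSup_natCast).symm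
        _ ≤ ⨆ n, Φn n x := by
            refine iSup_le fun n => le_iSup_of_le (max n N) ?_
            rw [hΦndef]
            simp only
            rw [Set.indicator_of_mem (monotone_spanningSets μ (le_max_right n N) hN), h,
              min_eq_right le_top]
            exact Nat.cast_le.2 (le_max_left n N)
    · obtain ⟨n, hn⟩ := ENNReal.exists_nat_gt h
      refine le_iSup_of_le (max n N) ?_
      rw [hΦndef]
      simp only
      rw [Set.indicator_of_mem (monotone_spanningSets μ (le_max_right n N) hN)]
      refine le_min le_rfl ?_
      exact hn.le.trans (Nat.cast_le.2 (le_max_left n N))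
  -- key bound for each truncation
  have key : ∀ n, ∫⁻ x, Φn n x ^ r ∂μ ≤ B ^ r := by
    intro n
    set A : ℝ≥0∞ := ∫⁻ x, Φn n x ^ r ∂μ with hA
    have hAfin : A ≠ ∞ := by
      have hb : ∀ x, Φn n x ^ r ≤
          (spanningSets μ n).indicator (fun _ => (n : ℝ≥0∞) ^ r) x := by
        intro x
        by_cases hx : x ∈ spanningSets μ n
        · rw [Set.indicator_of_mem hx]
          rw [hΦndef]
          simp only
          rw [Set.indicator_of_mem hx]
          exact ENNReal.rpow_le_rpow (min_le_right _ _) hr0.le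
        · rw [Set.indicator_of_notMem hx, hΦndef]
          simp only
          rw [Set.indicator_of_notMem hx, ENNReal.zero_rpow_of_pos hr0]
      have : A ≤ (n : ℝ≥0∞) ^ r * μ (spanningSets μ n) := by
        rw [hA, ← lintegral_indicator_const (measurableSet_spanningSets μ n)]
        exact lintegral_mono hb
      refine (this.trans_lt (ENNReal.mul_lt_top ?_ (measure_spanningSets_lt_top μ n))).ne
      exact ENNReal.rpow_lt_top_of_nonneg hr0.le (ENNReal.natCast_ne_top n)
    have hsplit : ∀ x, Φn n x ^ r = Φn n x * Φn n x ^ (r - 1) := by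
      intro x
      conv_lhs => rw [show r = 1 + (r - 1) by ring]
      rw [ENNReal.rpow_add_of_nonneg _ _ zero_le_one (by linarith), ENNReal.rpow_one]
    have step1 : A ≤ ∫⁻ x, Φ x * Φn n x ^ (r - 1) ∂μ := by
      rw [hA]
      simp_rw [hsplit]
      exact lintegral_mono fun x => mul_le_mul' (hΦnle n x) le_rfl
    have step2 : ∫⁻ x, Φ x * Φn n x ^ (r - 1) ∂μ =
        ∫⁻ y, ∫⁻ x, F x y * Φn n x ^ (r - 1) ∂μ ∂ν := by
      rw [← lintegral_lintegral_swap]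
      · congr 1
        funext x
        rw [hΦdef]
        simp only
        rw [← lintegral_mul_const _ (hF.of_uncurry_left)]
      · exact (hF.mul (((hΦnmeas n).pow_const (r - 1)).comp measurable_fst)).aemeasurable
    have step3 : ∀ y, ∫⁻ x, F x y * Φn n x ^ (r - 1) ∂μ ≤
        (∫⁻ x, F x y ^ r ∂μ) ^ (1/r) * A ^ (1/r') := by
      intro y
      have := ENNReal.lintegral_mul_le_Lp_mul_Lq μ hconj
        (f := fun x => F x y) (g := fun x => Φn n x ^ (r - 1))
        (hF.of_uncurry_right).aemeasurable ((hΦnmeas n).pow_const (r - 1)).aemeasurable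
      refine this.trans ?_
      refine mul_le_mul' le_rfl ?_
      refine le_of_eq ?_
      congr 1
      rw [hA]
      congr 1
      funext x
      rw [← ENNReal.rpow_mul, hconj.sub_one_mul_conj]
    have step4 : A ≤ B * A ^ (1/r') := by
      refine step1.trans ?_
      rw [step2]
      calc ∫⁻ y, ∫⁻ x, F x y * Φn n x ^ (r - 1) ∂μ ∂ν
          ≤ ∫⁻ y, (∫⁻ x, F x y ^ r ∂μ) ^ (1/r) * A ^ (1/r') ∂ν := lintegral_mono step3
        _ = B * A ^ (1/r') := by
            rw [hBdef, lintegral_mul_const']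
            exact ENNReal.rpow_ne_top_of_nonneg (one_div_nonneg.2 hconj.symm.nonneg) hAfin
    by_cases hA0 : A = 0
    · rw [hA0]; exact zero_le
    · have hcancel : A ^ (1/r) ≤ B := by
        have hAeq : A = A ^ (1/r) * A ^ (1/r') := by
          rw [← ENNReal.rpow_add _ _ hA0 hAfin]
          rw [one_div, one_div, hconj.inv_add_inv_eq_one, ENNReal.rpow_one]
        have step4' : A ^ (1/r) * A ^ (1/r') ≤ B * A ^ (1/r') := hAeq.symm.trans_le step4
        exact (ENNReal.mul_le_mul_iff_left
          (by simp [ENNReal.rpow_eq_zero_iff, hA0, hAfin])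
          (ENNReal.rpow_ne_top_of_nonneg (one_div_nonneg.2 hconj.symm.nonneg) hAfin)).1 step4'
      calc A = (A ^ (1/r)) ^ r := by
              rw [← ENNReal.rpow_mul, one_div, inv_mul_cancel₀ hr0.ne', ENNReal.rpow_one]
        _ ≤ B ^ r := ENNReal.rpow_le_rpow hcancel hr0.le
  -- monotone convergence
  have hsupr : ∫⁻ x, Φ x ^ r ∂μ = ⨆ n, ∫⁻ x, Φn n x ^ r ∂μ := by
    rw [← lintegral_iSup (fun n => (hΦnmeas n).pow_const r)
      (fun m n hmn x => ENNReal.rpow_le_rpow (hΦnmono hmn x) hr0.le)]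
    congr 1
    funext x
    rw [← hΦnsup x]
    refine le_antisymm ?_ (iSup_le fun n => ENNReal.rpow_le_rpow (le_iSup (fun n => Φn n x) n) hr0.le)
    have hmono : Monotone fun n => Φn n x := fun m n hmn => hΦnmono hmn x
    have hcont : ContinuousAt (fun z : ℝ≥0∞ => z ^ r) (⨆ n, Φn n x) :=
      (ENNReal.continuous_rpow_const).continuousAt
    have := (tendsto_atTop_iSup hmono)
    have h2 := (hcont.tendsto.comp this)
    exact le_of_tendsto' h2 (fun n => le_iSup (fun n => Φn n x ^ r) n)
  rw [hsupr]
  exact iSup_le key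

/-- Generalized Schur test: if `∫ K(x,y)^{δ₁ p'} h₁(y)^{p'} dμ(y) ≤ C₁ h₂(x)^{p'}` a.e.
and `∫ K(x,y)^{δ₂ q} h₂(x)^q dμ(x) ≤ C₂ h₁(y)^q` a.e., with `1 < p ≤ q < ∞`,
`1/p + 1/p' = 1` and `δ₁ + δ₂ = 1`, then the integral operator with nonnegative
kernel `K` maps `L^p` to `L^q` with norm at most `C₁^{1/p'} C₂^{1/q}`. -/
theorem generalized_schur_test
    {X : Type*} [MeasurableSpace X] (μ : Measure X) [SigmaFinite μ]
    (K : X → X → ℝ) (hK : Measurable (Function.uncurry K))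
    (hKnn : ∀ x y, 0 ≤ K x y)
    (p q p' : ℝ) (hp : 1 < p) (hpq : p ≤ q) 
    (hp' : 1 / p + 1 / p' = 1)
    (δ₁ δ₂ : ℝ) (hδ : δ₁ + δ₂ = 1)
    (h₁ h₂ : X → ℝ) (hh₁ : Measurable h₁) (hh₂ : Measurable h₂)
    (h₁pos : ∀ x, 0 < h₁ x) (h₂pos : ∀ x, 0 < h₂ x)
    (C₁ C₂ : ℝ) (hC₁ : 0 < C₁) (hC₂ : 0 < C₂)
    (cond₁ : ∀ᵐ x ∂μ,
      ∫⁻ y, ENNReal.ofReal (K x y ^ (δ₁ * p') * h₁ y ^ p') ∂μ ≤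
        ENNReal.ofReal (C₁ * h₂ x ^ p'))
    (cond₂ : ∀ᵐ y ∂μ,
      ∫⁻ x, ENNReal.ofReal (K x y ^ (δ₂ * q) * h₂ x ^ q) ∂μ ≤
        ENNReal.ofReal (C₂ * h₁ y ^ q)) :
    ∀ f : X → ℝ≥0∞, Measurable f →
      (∫⁻ x, (∫⁻ y, ENNReal.ofReal (K x y) * f y ∂μ) ^ q ∂μ) ^ (1 / q) ≤
        ENNReal.ofReal (C₁ ^ (1 / p') * C₂ ^ (1 / q)) *
          (∫⁻ y, f y ^ p ∂μ) ^ (1 / p) := by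
  intro f hf
  -- basic positivity
  have hp0 : (0:ℝ) < p := lt_trans one_pos hp
  have hq0 : (0:ℝ) < q := lt_of_lt_of_le hp0 hpq
  have hp'0 : (0:ℝ) < p' := by
    have h1 : 1/p' = 1 - 1/p := by linarith
    have h2 : (0:ℝ) < 1/p' := by
      rw [h1]
      have : 1/p < 1 := by rw [div_lt_one hp0]; exact hp
      linarith
    exact one_div_pos.1 h2
  have hconj : p.HolderConjugate p' := Real.holderConjugate_iff.2 ⟨hp, by rw [← one_div, ← one_div]; exact hp'⟩
  have hr1 : 1 ≤ q / p := (one_le_div hp0).2 hpq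
  have hr0 : (0:ℝ) < q / p := by positivity
  -- the inner p-th power integral after Hölder
  set A₂ : X → ℝ≥0∞ := fun x =>
    ∫⁻ y, ENNReal.ofReal (K x y ^ (δ₂ * p)) * f y ^ p / ENNReal.ofReal (h₁ y ^ p) ∂μ
    with hA₂def
  -- pointwise factorization
  have hfact : ∀ x y, ENNReal.ofReal (K x y) * f y =
      ENNReal.ofReal (K x y ^ δ₁ * h₁ y) *
        (ENNReal.ofReal (K x y ^ δ₂) * f y / ENNReal.ofReal (h₁ y)) := by
    intro x y
    have ha0 : ENNReal.ofReal (h₁ y) ≠ 0 := ne_of_gt (ENNReal.ofReal_pos.2 (h₁pos y))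
    have hat : ENNReal.ofReal (h₁ y) ≠ ∞ := ENNReal.ofReal_ne_top
    have hKK : K x y ^ δ₁ * K x y ^ δ₂ = K x y := by
      rcases eq_or_lt_of_le (hKnn x y) with h | h
      · by_cases hδ₁ : δ₁ = 0
        · have hδ₂ : δ₂ = 1 := by linarith
          simp [hδ₁, hδ₂, ← h]
        · rw [← h, Real.zero_rpow hδ₁, zero_mul]
      · rw [← Real.rpow_add h, hδ, Real.rpow_one]
    have hsplitK : ENNReal.ofReal (K x y ^ δ₁) * ENNReal.ofReal (K x y ^ δ₂) =
        ENNReal.ofReal (K x y) := by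
      rw [← ENNReal.ofReal_mul (Real.rpow_nonneg (hKnn x y) δ₁), hKK]
    calc ENNReal.ofReal (K x y) * f y
        = (ENNReal.ofReal (K x y ^ δ₁) * ENNReal.ofReal (K x y ^ δ₂)) * f y *
            (ENNReal.ofReal (h₁ y) * (ENNReal.ofReal (h₁ y))⁻¹) := by
          rw [ENNReal.mul_inv_cancel ha0 hat, hsplitK, mul_one]
      _ = ENNReal.ofReal (K x y ^ δ₁ * h₁ y) *
            (ENNReal.ofReal (K x y ^ δ₂) * f y / ENNReal.ofReal (h₁ y)) := by
          rw [ENNReal.ofReal_mul (Real.rpow_nonneg (hKnn x y) δ₁), div_eq_mul_inv]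
          ring
  -- Hölder step (a.e. in x)
  have holder : ∀ᵐ x ∂μ, (∫⁻ y, ENNReal.ofReal (K x y) * f y ∂μ) ≤
      (ENNReal.ofReal C₁) ^ (1/p') * ENNReal.ofReal (h₂ x) * (A₂ x) ^ (1/p) := by
    filter_upwards [cond₁] with x hx
    have e1 : ∀ y, (ENNReal.ofReal (K x y ^ δ₁ * h₁ y)) ^ p' =
        ENNReal.ofReal (K x y ^ (δ₁ * p') * h₁ y ^ p') := by
      intro y
      rw [ENNReal.ofReal_rpow_of_nonneg
        (mul_nonneg (Real.rpow_nonneg (hKnn x y) δ₁) (h₁pos y).le) hp'0.le]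
      congr 1
      rw [Real.mul_rpow (Real.rpow_nonneg (hKnn x y) δ₁) (h₁pos y).le,
        ← Real.rpow_mul (hKnn x y)]
    have e2 : ∀ y, (ENNReal.ofReal (K x y ^ δ₂) * f y / ENNReal.ofReal (h₁ y)) ^ p =
        ENNReal.ofReal (K x y ^ (δ₂ * p)) * f y ^ p / ENNReal.ofReal (h₁ y ^ p) := by
      intro y
      rw [div_eq_mul_inv, ENNReal.mul_rpow_of_nonneg _ _ hp0.le,
        ENNReal.mul_rpow_of_nonneg _ _ hp0.le, ENNReal.inv_rpow,
        ENNReal.ofReal_rpow_of_nonneg (Real.rpow_nonneg (hKnn x y) δ₂) hp0.le,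
        ← Real.rpow_mul (hKnn x y),
        ENNReal.ofReal_rpow_of_nonneg (h₁pos y).le hp0.le, div_eq_mul_inv]
    calc (∫⁻ y, ENNReal.ofReal (K x y) * f y ∂μ)
        = ∫⁻ y, ENNReal.ofReal (K x y ^ δ₁ * h₁ y) *
            (ENNReal.ofReal (K x y ^ δ₂) * f y / ENNReal.ofReal (h₁ y)) ∂μ := by
          congr 1; funext y; exact hfact x y
      _ ≤ (∫⁻ y, (ENNReal.ofReal (K x y ^ δ₁ * h₁ y)) ^ p' ∂μ) ^ (1/p') *
            (∫⁻ y, (ENNReal.ofReal (K x y ^ δ₂) * f y / ENNReal.ofReal (h₁ y)) ^ p ∂μ)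
              ^ (1/p) := by
          refine ENNReal.lintegral_mul_le_Lp_mul_Lq μ hconj.symm ?_ ?_
          · exact ((hK.of_uncurry_left.pow_const δ₁).mul hh₁).ennreal_ofReal.aemeasurable
          · exact (((hK.of_uncurry_left.pow_const δ₂).ennreal_ofReal.mul hf).div
              hh₁.ennreal_ofReal).aemeasurable
      _ ≤ (ENNReal.ofReal (C₁ * h₂ x ^ p')) ^ (1/p') * (A₂ x) ^ (1/p) := by
          refine mul_le_mul' (ENNReal.rpow_le_rpow ?_ (by positivity)) (le_of_eq ?_)
          · simp_rw [e1]; exact hx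
          · rw [hA₂def]; simp only; congr 1; exact lintegral_congr fun y => e2 y
      _ = (ENNReal.ofReal C₁) ^ (1/p') * ENNReal.ofReal (h₂ x) * (A₂ x) ^ (1/p) := by
          congr 1
          rw [ENNReal.ofReal_mul hC₁.le,
            ← ENNReal.ofReal_rpow_of_nonneg (h₂pos x).le hp'0.le,
            ENNReal.mul_rpow_of_nonneg _ _ (by positivity : (0:ℝ) ≤ 1/p'),
            ← ENNReal.rpow_mul, mul_one_div_cancel hp'0.ne', ENNReal.rpow_one]
  -- raise to the q-th power and integrate
  have hc₁top : (ENNReal.ofReal C₁) ^ (q/p') ≠ ∞ :=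
    ENNReal.rpow_ne_top_of_nonneg (by positivity) ENNReal.ofReal_ne_top
  have step_q : ∫⁻ x, (∫⁻ y, ENNReal.ofReal (K x y) * f y ∂μ) ^ q ∂μ ≤
      (ENNReal.ofReal C₁) ^ (q/p') *
        ∫⁻ x, (ENNReal.ofReal (h₂ x)) ^ q * (A₂ x) ^ (q/p) ∂μ := by
    rw [← lintegral_const_mul' _ _ hc₁top]
    refine lintegral_mono_ae ?_
    filter_upwards [holder] with x hx
    calc (∫⁻ y, ENNReal.ofReal (K x y) * f y ∂μ) ^ q
        ≤ ((ENNReal.ofReal C₁) ^ (1/p') * ENNReal.ofReal (h₂ x) * (A₂ x) ^ (1/p)) ^ q :=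
          ENNReal.rpow_le_rpow hx hq0.le
      _ = (ENNReal.ofReal C₁) ^ (q/p') * ((ENNReal.ofReal (h₂ x)) ^ q * (A₂ x) ^ (q/p)) := by
          rw [ENNReal.mul_rpow_of_nonneg _ _ hq0.le, ENNReal.mul_rpow_of_nonneg _ _ hq0.le,
            ← ENNReal.rpow_mul, ← ENNReal.rpow_mul,
            show (1/p') * q = q/p' by ring, show (1/p) * q = q/p by ring, mul_assoc]
  -- the product kernel for Minkowski's integral inequality
  set F : X → X → ℝ≥0∞ := fun x y => ENNReal.ofReal (h₂ x ^ p) *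
      (ENNReal.ofReal (K x y ^ (δ₂ * p)) * f y ^ p / ENNReal.ofReal (h₁ y ^ p)) with hFdef
  have hFmeas : Measurable (Function.uncurry F) := by
    apply Measurable.mul
    · exact ((hh₂.comp measurable_fst).pow_const p).ennreal_ofReal
    · apply Measurable.div
      · exact ((hK.pow_const (δ₂*p)).ennreal_ofReal.mul ((hf.comp measurable_snd).pow_const p))
      · exact ((hh₁.comp measurable_snd).pow_const p).ennreal_ofReal
  have lhs_eq : ∫⁻ x, (ENNReal.ofReal (h₂ x)) ^ q * (A₂ x) ^ (q/p) ∂μ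
      = ∫⁻ x, (∫⁻ y, F x y ∂μ) ^ (q/p) ∂μ := by
    refine lintegral_congr fun x => ?_
    have hAx : (∫⁻ y, F x y ∂μ) = ENNReal.ofReal (h₂ x ^ p) * A₂ x := by
      rw [hFdef, hA₂def]
      exact lintegral_const_mul' _ _ ENNReal.ofReal_ne_top
    rw [hAx, ENNReal.mul_rpow_of_nonneg _ _ hr0.le]
    congr 1
    rw [← ENNReal.ofReal_rpow_of_nonneg (h₂pos x).le hp0.le, ← ENNReal.rpow_mul,
      show p * (q/p) = q by field_simp]
  have inner_bound : ∀ᵐ y ∂μ, (∫⁻ x, F x y ^ (q/p) ∂μ) ≤ ENNReal.ofReal C₂ * f y ^ q := by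
    filter_upwards [cond₂] with y hy
    have hb0 : ENNReal.ofReal (h₁ y ^ q) ≠ 0 :=
      ne_of_gt (ENNReal.ofReal_pos.2 (Real.rpow_pos_of_pos (h₁pos y) q))
    have hbt : ENNReal.ofReal (h₁ y ^ q) ≠ ∞ := ENNReal.ofReal_ne_top
    have eF : ∀ x, F x y ^ (q/p) =
        (f y ^ q / ENNReal.ofReal (h₁ y ^ q)) *
          ENNReal.ofReal (K x y ^ (δ₂ * q) * h₂ x ^ q) := by
      intro x
      rw [hFdef]
      simp only
      rw [div_eq_mul_inv, ENNReal.mul_rpow_of_nonneg _ _ hr0.le,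
        ENNReal.mul_rpow_of_nonneg _ _ hr0.le, ENNReal.mul_rpow_of_nonneg _ _ hr0.le,
        ENNReal.inv_rpow,
        ENNReal.ofReal_rpow_of_nonneg (Real.rpow_nonneg (h₂pos x).le p) hr0.le,
        ENNReal.ofReal_rpow_of_nonneg (Real.rpow_nonneg (hKnn x y) _) hr0.le,
        ENNReal.ofReal_rpow_of_nonneg (Real.rpow_nonneg (h₁pos y).le p) hr0.le,
        ← Real.rpow_mul (h₂pos x).le, ← Real.rpow_mul (hKnn x y),
        ← Real.rpow_mul (h₁pos y).le, ← ENNReal.rpow_mul,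
        show p * (q/p) = q by field_simp, show δ₂ * p * (q/p) = δ₂ * q by field_simp,
        ENNReal.ofReal_mul (Real.rpow_nonneg (hKnn x y) _), div_eq_mul_inv]
      ring
    calc ∫⁻ x, F x y ^ (q/p) ∂μ
        = (f y ^ q / ENNReal.ofReal (h₁ y ^ q)) *
            ∫⁻ x, ENNReal.ofReal (K x y ^ (δ₂ * q) * h₂ x ^ q) ∂μ := by
          simp_rw [eF]
          exact lintegral_const_mul _
            (((hK.of_uncurry_right.pow_const _).mul (hh₂.pow_const q)).ennreal_ofReal)
      _ ≤ (f y ^ q / ENNReal.ofReal (h₁ y ^ q)) * ENNReal.ofReal (C₂ * h₁ y ^ q) :=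
          mul_le_mul' le_rfl hy
      _ = ENNReal.ofReal C₂ * f y ^ q := by
          rw [ENNReal.ofReal_mul hC₂.le, div_eq_mul_inv]
          calc f y ^ q * (ENNReal.ofReal (h₁ y ^ q))⁻¹ *
                (ENNReal.ofReal C₂ * ENNReal.ofReal (h₁ y ^ q))
              = ENNReal.ofReal C₂ * f y ^ q *
                  ((ENNReal.ofReal (h₁ y ^ q))⁻¹ * ENNReal.ofReal (h₁ y ^ q)) := by ring
            _ = ENNReal.ofReal C₂ * f y ^ q := by
                rw [ENNReal.inv_mul_cancel hb0 hbt, mul_one]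
  have rhs_le : ∫⁻ y, (∫⁻ x, F x y ^ (q/p) ∂μ) ^ (p/q) ∂μ ≤
      (ENNReal.ofReal C₂) ^ (p/q) * ∫⁻ y, f y ^ p ∂μ := by
    rw [← lintegral_const_mul' _ _
      (ENNReal.rpow_ne_top_of_nonneg (by positivity) ENNReal.ofReal_ne_top)]
    refine lintegral_mono_ae ?_
    filter_upwards [inner_bound] with y hy
    calc (∫⁻ x, F x y ^ (q/p) ∂μ) ^ (p/q)
        ≤ (ENNReal.ofReal C₂ * f y ^ q) ^ (p/q) :=
          ENNReal.rpow_le_rpow hy (by positivity)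
      _ = (ENNReal.ofReal C₂) ^ (p/q) * f y ^ p := by
          rw [ENNReal.mul_rpow_of_nonneg _ _ (by positivity : (0:ℝ) ≤ p/q),
            ← ENNReal.rpow_mul, show q * (p/q) = p by field_simp]
  -- assemble everything
  have main : ∫⁻ x, (∫⁻ y, ENNReal.ofReal (K x y) * f y ∂μ) ^ q ∂μ ≤
      (ENNReal.ofReal C₁) ^ (q/p') *
        (ENNReal.ofReal C₂ * (∫⁻ y, f y ^ p ∂μ) ^ (q/p)) := by
    refine step_q.trans (mul_le_mul' le_rfl ?_)
    rw [lhs_eq]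
    have hmink := minkowski_lintegral μ μ F hFmeas hr1
    rw [one_div_div] at hmink
    refine hmink.trans ?_
    have h2 := ENNReal.rpow_le_rpow rhs_le hr0.le
    refine h2.trans_eq ?_
    rw [ENNReal.mul_rpow_of_nonneg _ _ hr0.le, ← ENNReal.rpow_mul,
      show (p/q) * (q/p) = 1 by field_simp, ENNReal.rpow_one]
  calc (∫⁻ x, (∫⁻ y, ENNReal.ofReal (K x y) * f y ∂μ) ^ q ∂μ) ^ (1/q)
      ≤ ((ENNReal.ofReal C₁) ^ (q/p') *
          (ENNReal.ofReal C₂ * (∫⁻ y, f y ^ p ∂μ) ^ (q/p))) ^ (1/q) :=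
        ENNReal.rpow_le_rpow main (by positivity)
    _ = ENNReal.ofReal (C₁ ^ (1/p') * C₂ ^ (1/q)) * (∫⁻ y, f y ^ p ∂μ) ^ (1/p) := by
        rw [ENNReal.mul_rpow_of_nonneg _ _ (by positivity : (0:ℝ) ≤ 1/q),
          ENNReal.mul_rpow_of_nonneg _ _ (by positivity : (0:ℝ) ≤ 1/q),
          ← ENNReal.rpow_mul, ← ENNReal.rpow_mul,
          show (q/p') * (1/q) = 1/p' by field_simp,
          show (q/p) * (1/q) = 1/p by field_simp,
          ENNReal.ofReal_mul (by positivity),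
          ← ENNReal.ofReal_rpow_of_nonneg hC₁.le (by positivity : (0:ℝ) ≤ 1/p'),
          ← ENNReal.ofReal_rpow_of_nonneg hC₂.le (by positivity : (0:ℝ) ≤ 1/q),
          mul_assoc]
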